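/- Let κ be a Stieltjes–Volterra kernel of type B^∞ on [a,b]×[a,b]. If z : [a,b] → ℂ^d is bounded and measurable and satisfies the homogeneous Volterra equation z(t) = ∫_{(a,t)} dκ(t,τ) z(τ) for all a ≤ t ≤ b (the integral being over the open interval (a,t)), then z vanishes identically on [a,b]. -/

import Mathlib

open MeasureTheory Set
open scoped ENNReal NNReal
open scoped Matrix.Norms.L2Operator

noncomputable section

-- The Lebesgue–Stieltjes measure of a monotone function (zero if not monotone).
open scoped Classical in
noncomputable def monoMeasure (m : ℝ → ℝ) : Measure ℝ :=
  if h : Monotone m then h.stieltjesFunction.measure else 0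

/-- The function `f` clamped to the interval `[c,e]`. -/
def clampOn (f : ℝ → ℝ) (c e : ℝ) : ℝ → ℝ := fun x => f (max c (min x e))

/-- Cumulative total variation of the clamped function. -/
def varFun (f : ℝ → ℝ) (c e : ℝ) : ℝ → ℝ :=
  fun x => (eVariationOn (clampOn f c e) (Icc c x)).toReal

/-- Positive (Jordan) part. -/
def posPartFun (f : ℝ → ℝ) (c e : ℝ) : ℝ → ℝ :=
  fun x => (varFun f c e x + clampOn f c e x - f c) / 2

/-- Negative (Jordan) part. -/
def negPartFun (f : ℝ → ℝ) (c e : ℝ) : ℝ → ℝ :=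
  fun x => (varFun f c e x - clampOn f c e x + f c) / 2

/-- Lebesgue–Stieltjes integral of `φ` against (the measure associated with the
restriction to `[c,e)` of) the function `f`, over `[c,e)`. -/
def lsIntIcoR (f : ℝ → ℝ) (c e : ℝ) (φ : ℝ → ℝ) : ℝ :=
  (∫ x in Ico c e, φ x ∂(monoMeasure (posPartFun f c e))) -
  (∫ x in Ico c e, φ x ∂(monoMeasure (negPartFun f c e)))

/-- Same, over the open interval `(c,e)`. -/
def lsIntIooR (f : ℝ → ℝ) (c e : ℝ) (φ : ℝ → ℝ) : ℝ :=
  (∫ x in Ioo c e, φ x ∂(monoMeasure (posPartFun f c e))) -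
  (∫ x in Ioo c e, φ x ∂(monoMeasure (negPartFun f c e)))

/-- Complex Lebesgue–Stieltjes integral `∫_{[c,e)} φ df`. -/
def lsIntIcoC (f : ℝ → ℂ) (c e : ℝ) (φ : ℝ → ℂ) : ℂ :=
  (lsIntIcoR (fun x => (f x).re) c e (fun x => (φ x).re)
    - lsIntIcoR (fun x => (f x).im) c e (fun x => (φ x).im))
  + Complex.I * (lsIntIcoR (fun x => (f x).re) c e (fun x => (φ x).im)
    + lsIntIcoR (fun x => (f x).im) c e (fun x => (φ x).re))

def lsIntIooC (f : ℝ → ℂ) (c e : ℝ) (φ : ℝ → ℂ) : ℂ :=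
  (lsIntIooR (fun x => (f x).re) c e (fun x => (φ x).re)
    - lsIntIooR (fun x => (f x).im) c e (fun x => (φ x).im))
  + Complex.I * (lsIntIooR (fun x => (f x).re) c e (fun x => (φ x).im)
    + lsIntIooR (fun x => (f x).im) c e (fun x => (φ x).re))

/-- `∫_{[c,e)} dF(τ) G(τ)` for matrix-valued `F` (the integrator) and `G`. -/
def lsIntIcoMM {d : ℕ} (F : ℝ → Matrix (Fin d) (Fin d) ℂ) (c e : ℝ)
    (G : ℝ → Matrix (Fin d) (Fin d) ℂ) : Matrix (Fin d) (Fin d) ℂ :=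
  Matrix.of fun i k => ∑ j, lsIntIcoC (fun τ => F τ i j) c e (fun τ => G τ j k)

/-- `∫_{[c,e)} dF(τ) g(τ)` for matrix-valued `F` and vector-valued `g`. -/
def lsIntIcoMV {d : ℕ} (F : ℝ → Matrix (Fin d) (Fin d) ℂ) (c e : ℝ)
    (g : ℝ → Fin d → ℂ) : Fin d → ℂ :=
  fun i => ∑ j, lsIntIcoC (fun τ => F τ i j) c e (fun τ => g τ j)

def lsIntIooMV {d : ℕ} (F : ℝ → Matrix (Fin d) (Fin d) ℂ) (c e : ℝ)
    (g : ℝ → Fin d → ℂ) : Fin d → ℂ :=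
  fun i => ∑ j, lsIntIooC (fun τ => F τ i j) c e (fun τ => g τ j)

instance matrixMeasurableSpace {d : ℕ} : MeasurableSpace (Matrix (Fin d) (Fin d) ℂ) :=
  inferInstanceAs (MeasurableSpace (Fin d → Fin d → ℂ))

/-- A Stieltjes–Volterra kernel of type `B^∞` on `[a,b] × [a,b]`. -/
def IsSVKernel (d : ℕ) (a b : ℝ) (κ : ℝ → ℝ → Matrix (Fin d) (Fin d) ℂ) : Prop :=
  Measurable ((Icc a b ×ˢ Icc a b).restrict (fun p : ℝ × ℝ => κ p.1 p.2)) ∧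
  (∀ t ∈ Icc a b, ∀ τ ∈ Icc a b, t ≤ τ → κ t τ = 0) ∧
  (∀ t ∈ Icc a b, ∀ x ∈ Icc a b, ContinuousWithinAt (κ t) (Icc a b ∩ Iio x) x) ∧
  (∃ C : ℝ, ∀ t ∈ Icc a b, eVariationOn (κ t) (Icc a b) ≤ ENNReal.ofReal C) ∧
  (∀ ε > (0:ℝ), ∃ η > (0:ℝ), ∀ t ∈ Icc a b, ∀ τ ∈ Icc a b, 0 < t - τ → t - τ < η →
      eVariationOn (κ t) (Ico τ t) < ENNReal.ofReal ε)

/-- The norm `‖κ‖_{[a,b]} = sup_t ‖κ(t,·)‖_{BV([a,b])}` (base point `b`). -/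
def KNorm (d : ℕ) (a b : ℝ) (κ : ℝ → ℝ → Matrix (Fin d) (Fin d) ℂ) : ℝ≥0∞ :=
  ⨆ t ∈ Icc a b, eVariationOn (κ t) (Icc a b)

/-- `ρ` is a resolvent of the kernel `κ`. -/
def IsResolvent (d : ℕ) (a b : ℝ) (κ ρ : ℝ → ℝ → Matrix (Fin d) (Fin d) ℂ) : Prop :=
  IsSVKernel d a b ρ ∧
  ∀ t ∈ Icc a b, ∀ β ∈ Icc a b,
    ρ t β = -κ t β + lsIntIcoMM (κ t) β t (fun τ => ρ τ β)

instance eucCMeasurableSpace {d : ℕ} : MeasurableSpace (EuclideanSpace ℂ (Fin d)) :=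
  MeasurableSpace.comap (WithLp.ofLp (p := 2)) MeasurableSpace.pi

/-- Reinterpret a vector of `Fin d → ℂ` as an element of `ℂ^d` with the
Euclidean norm (the types are definitionally equal). -/
def toEuc {d : ℕ} (v : Fin d → ℂ) : EuclideanSpace ℂ (Fin d) := WithLp.toLp 2 v


/-! ### Auxiliary lemmas -/

section AuxLemmas

lemma monoMeasure_Ioo_ne_top (q : ℝ → ℝ) (u v : ℝ) : monoMeasure q (Ioo u v) ≠ ⊤ := by
  unfold monoMeasure
  split_ifs with h
  · rw [StieltjesFunction.measure_Ioo]; exact ENNReal.ofReal_ne_top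
  · simp

lemma monoMeasure_Ioc_ne_top (q : ℝ → ℝ) (u v : ℝ) : monoMeasure q (Ioc u v) ≠ ⊤ := by
  unfold monoMeasure
  split_ifs with h
  · rw [StieltjesFunction.measure_Ioc]; exact ENNReal.ofReal_ne_top
  · simp

lemma varFun_sub (f : ℝ → ℝ) {a t x y : ℝ} (hfin : eVariationOn f (Icc a t) ≠ ⊤)
    (hax : a ≤ x) (hxy : x ≤ y) (hyt : y ≤ t) :
    varFun f a t y - varFun f a t x = (eVariationOn f (Icc x y)).toReal := by
  have hclamp : ∀ u v : ℝ, a ≤ u → v ≤ t →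
      eVariationOn (clampOn f a t) (Icc u v) = eVariationOn f (Icc u v) := by
    intro u v hu hv
    apply eVariationOn.eq_of_eqOn
    intro w hw
    have h1 : a ≤ w := hu.trans hw.1
    have h2 : w ≤ t := hw.2.trans hv
    simp [clampOn, min_eq_left h2, max_eq_right h1]
  have hadd : eVariationOn f (Icc a x) + eVariationOn f (Icc x y) = eVariationOn f (Icc a y) := by
    have := eVariationOn.Icc_add_Icc f (s := univ) hax hxy (mem_univ x)
    simpa [univ_inter] using this
  have hfy : eVariationOn f (Icc a y) ≠ ⊤ :=
    ne_top_of_le_ne_top hfin (eVariationOn.mono f (Icc_subset_Icc le_rfl hyt))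
  have hfx : eVariationOn f (Icc a x) ≠ ⊤ :=
    ne_top_of_le_ne_top hfin (eVariationOn.mono f (Icc_subset_Icc le_rfl (hxy.trans hyt)))
  have hfxy : eVariationOn f (Icc x y) ≠ ⊤ :=
    ne_top_of_le_ne_top hfy (eVariationOn.mono f (Icc_subset_Icc hax le_rfl))
  unfold varFun
  rw [hclamp a x le_rfl (hxy.trans hyt), hclamp a y le_rfl hyt, ← hadd,
    ENNReal.toReal_add hfx hfxy]
  ring

lemma clamp_abs_sub (f : ℝ → ℝ) {a t x y : ℝ} (hfin : eVariationOn f (Icc a t) ≠ ⊤)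
    (hax : a ≤ x) (hxy : x ≤ y) (hyt : y ≤ t) :
    |clampOn f a t y - clampOn f a t x| ≤ (eVariationOn f (Icc x y)).toReal := by
  have h1 : clampOn f a t y = f y := by
    simp [clampOn, min_eq_left hyt, max_eq_right (hax.trans hxy)]
  have h2 : clampOn f a t x = f x := by
    simp [clampOn, min_eq_left (hxy.trans hyt), max_eq_right hax]
  rw [h1, h2]
  have hed := eVariationOn.edist_le f (s := Icc x y) (x := x) (y := y)
    ⟨le_rfl, hxy⟩ ⟨hxy, le_rfl⟩
  have hfy : eVariationOn f (Icc a y) ≠ ⊤ :=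
    ne_top_of_le_ne_top hfin (eVariationOn.mono f (Icc_subset_Icc le_rfl hyt))
  have hfxy : eVariationOn f (Icc x y) ≠ ⊤ :=
    ne_top_of_le_ne_top hfy (eVariationOn.mono f (Icc_subset_Icc hax le_rfl))
  have := ENNReal.toReal_mono hfxy hed
  rwa [edist_dist, ENNReal.toReal_ofReal dist_nonneg, Real.dist_eq, abs_sub_comm] at this

lemma posPart_slope (f : ℝ → ℝ) {a t : ℝ} (hfin : eVariationOn f (Icc a t) ≠ ⊤) :
    ∀ x y, a ≤ x → x ≤ y → y ≤ t →
      posPartFun f a t y - posPartFun f a t x ≤ varFun f a t y - varFun f a t x := by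
  intro x y hax hxy hyt
  have h1 := varFun_sub f hfin hax hxy hyt
  have h2 := (abs_le.1 (clamp_abs_sub f hfin hax hxy hyt)).2
  unfold posPartFun
  linarith

lemma negPart_slope (f : ℝ → ℝ) {a t : ℝ} (hfin : eVariationOn f (Icc a t) ≠ ⊤) :
    ∀ x y, a ≤ x → x ≤ y → y ≤ t →
      negPartFun f a t y - negPartFun f a t x ≤ varFun f a t y - varFun f a t x := by
  intro x y hax hxy hyt
  have h1 := varFun_sub f hfin hax hxy hyt
  have h2 := (abs_le.1 (clamp_abs_sub f hfin hax hxy hyt)).1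
  unfold negPartFun
  linarith

lemma monoMeasure_Ioo_le (f : ℝ → ℝ) {a t c : ℝ} (hac : a ≤ c) (hct : c < t)
    (hfin : eVariationOn f (Icc a t) ≠ ⊤) (q : ℝ → ℝ)
    (hq : ∀ x y, a ≤ x → x ≤ y → y ≤ t → q y - q x ≤ varFun f a t y - varFun f a t x) :
    monoMeasure q (Ioo c t) ≤ eVariationOn f (Ico c t) := by
  unfold monoMeasure
  split_ifs with h
  · rw [StieltjesFunction.measure_Ioo]
    by_cases hW : eVariationOn f (Ico c t) = ⊤
    · rw [hW]; exact le_top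
    set w := (eVariationOn f (Ico c t)).toReal with hw
    have key : ∀ y ∈ Ioo c t, h.stieltjesFunction y ≤ q c + w := by
      intro y hy
      set y' := (y + t) / 2 with hy'
      have hyy' : y < y' := by simp only [hy']; linarith [hy.2]
      have hy't : y' < t := by simp only [hy']; linarith [hy.2]
      have hcy' : c ≤ y' := le_of_lt (lt_trans hy.1 hyy')
      have hF : h.stieltjesFunction y = Function.rightLim q y := h.stieltjesFunction_eq y
      have h1 : Function.rightLim q y ≤ q y' := h.rightLim_le hyy'
      have h2 : q y' - q c ≤ varFun f a t y' - varFun f a t c := hq c y' hac hcy' hy't.le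
      have h3 : varFun f a t y' - varFun f a t c = (eVariationOn f (Icc c y')).toReal :=
        varFun_sub f hfin hac hcy' hy't.le
      have h4 : (eVariationOn f (Icc c y')).toReal ≤ w := by
        apply ENNReal.toReal_mono hW
        exact eVariationOn.mono f (fun u hu => ⟨hu.1, lt_of_le_of_lt hu.2 hy't⟩)
      rw [hF]
      linarith
    have hll : Function.leftLim h.stieltjesFunction t ≤ q c + w := by
      apply le_of_tendsto (h.stieltjesFunction.mono.tendsto_leftLim t)
      filter_upwards [Ioo_mem_nhdsLT_of_mem ⟨hct, le_rfl⟩] with y hy using key y hy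
    have hc : q c ≤ h.stieltjesFunction c := by
      rw [h.stieltjesFunction_eq]; exact h.le_rightLim le_rfl
    calc ENNReal.ofReal (Function.leftLim h.stieltjesFunction t - h.stieltjesFunction c)
        ≤ ENNReal.ofReal w := ENNReal.ofReal_le_ofReal (by linarith)
      _ ≤ _ := ENNReal.ofReal_toReal_le
  · simp

lemma lsIntIooR_bound (f φ : ℝ → ℝ) {a c t S ε : ℝ} (hac : a ≤ c) (hct : c < t)
    (hfin : eVariationOn f (Icc a t) ≠ ⊤)
    (hvar : eVariationOn f (Ico c t) ≤ ENNReal.ofReal ε)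
    (hφm : Measurable φ) (hφ0 : ∀ τ ∈ Ioc a c, φ τ = 0)
    (hφS : ∀ τ ∈ Ioo c t, |φ τ| ≤ S) (hS : 0 ≤ S) (hε : 0 ≤ ε) :
    |lsIntIooR f a t φ| ≤ 2 * (S * ε) := by
  have key : ∀ q : ℝ → ℝ,
      (∀ x y, a ≤ x → x ≤ y → y ≤ t → q y - q x ≤ varFun f a t y - varFun f a t x) →
      |∫ x in Ioo a t, φ x ∂(monoMeasure q)| ≤ S * ε := by
    intro q hq
    have hμ1 : monoMeasure q (Ioc a c) ≠ ⊤ := monoMeasure_Ioc_ne_top q a c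
    have hμ2 : monoMeasure q (Ioo c t) ≠ ⊤ := monoMeasure_Ioo_ne_top q c t
    have hint2 : IntegrableOn φ (Ioo c t) (monoMeasure q) := by
      apply Measure.integrableOn_of_bounded hμ2 hφm.aestronglyMeasurable
      exact (ae_restrict_iff' measurableSet_Ioo).2 (ae_of_all _ fun x hx => by
        rw [Real.norm_eq_abs]; exact hφS x hx)
    have hint1 : IntegrableOn φ (Ioc a c) (monoMeasure q) :=
      (integrableOn_zero).congr_fun (fun x hx => (hφ0 x hx).symm) measurableSet_Ioc
    have hdisj : Disjoint (Ioc a c) (Ioo c t) := by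
      rw [disjoint_left]
      rintro x ⟨_, hxc⟩ ⟨hcx, _⟩
      exact absurd hcx (not_lt.2 hxc)
    rw [← Ioc_union_Ioo_eq_Ioo hac hct,
      setIntegral_union hdisj measurableSet_Ioo hint1 hint2]
    have hz : ∫ x in Ioc a c, φ x ∂(monoMeasure q) = 0 := by
      rw [setIntegral_congr_fun measurableSet_Ioc (fun x hx => hφ0 x hx : EqOn φ 0 (Ioc a c))]
      simp
    rw [hz, zero_add]
    have hb : |∫ x in Ioo c t, φ x ∂(monoMeasure q)|
        ≤ S * ((monoMeasure q) (Ioo c t)).toReal := by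
      have := norm_setIntegral_le_of_norm_le_const (lt_top_iff_ne_top.2 hμ2)
        (f := φ) (C := S)
        (fun x hx => by rw [Real.norm_eq_abs]; exact hφS x hx)
      simpa [Real.norm_eq_abs, Measure.real] using this
    refine hb.trans ?_
    apply mul_le_mul_of_nonneg_left _ hS
    have hle : (monoMeasure q) (Ioo c t) ≤ ENNReal.ofReal ε :=
      (monoMeasure_Ioo_le f hac hct hfin q hq).trans hvar
    calc ((monoMeasure q) (Ioo c t)).toReal
        ≤ (ENNReal.ofReal ε).toReal := ENNReal.toReal_mono ENNReal.ofReal_ne_top hle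
      _ = ε := ENNReal.toReal_ofReal hε
  have h1 := key _ (posPart_slope f hfin)
  have h2 := key _ (negPart_slope f hfin)
  unfold lsIntIooR
  set A := ∫ x in Ioo a t, φ x ∂(monoMeasure (posPartFun f a t)) with hA
  set B := ∫ x in Ioo a t, φ x ∂(monoMeasure (negPartFun f a t)) with hB
  have habs : |A - B| ≤ |A| + |B| := by
    rw [sub_eq_add_neg]
    exact (abs_add_le _ _).trans (by rw [abs_neg])
  linarith

end AuxLemmas


section AuxLemmas2

lemma euc_coord_le {d : ℕ} (v : EuclideanSpace ℂ (Fin d)) (i : Fin d) : ‖v i‖ ≤ ‖v‖ := by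
  rw [EuclideanSpace.norm_eq]
  have h : ‖v i‖ = Real.sqrt (‖v i‖ ^ 2) := (Real.sqrt_sq (norm_nonneg _)).symm
  rw [h]
  apply Real.sqrt_le_sqrt
  exact Finset.single_le_sum (f := fun k => ‖v k‖ ^ 2) (fun k _ => sq_nonneg _)
    (Finset.mem_univ i)

lemma euc_norm_le_sum {d : ℕ} (v : EuclideanSpace ℂ (Fin d)) : ‖v‖ ≤ ∑ i, ‖v i‖ := by
  rw [EuclideanSpace.norm_eq]
  calc Real.sqrt (∑ i, ‖v i‖ ^ 2) ≤ Real.sqrt ((∑ i, ‖v i‖) ^ 2) :=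
        Real.sqrt_le_sqrt (Finset.sum_sq_le_sq_sum_of_nonneg fun i _ => norm_nonneg _)
    _ = ∑ i, ‖v i‖ := Real.sqrt_sq (Finset.sum_nonneg fun i _ => norm_nonneg _)

lemma entry_norm_le {d : ℕ} (A : Matrix (Fin d) (Fin d) ℂ) (i j : Fin d) :
    ‖A i j‖ ≤ ‖A‖ := by
  classical
  have h := A.l2_opNorm_mulVec (EuclideanSpace.single j (1 : ℂ))
  rw [EuclideanSpace.norm_single, norm_one, mul_one] at h
  refine le_trans ?_ h
  have hcomp : ((EuclideanSpace.equiv (Fin d) ℂ).symm (A.mulVec  (EuclideanSpace.single j 1))) i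
      = A i j := by
    show (A.mulVec  (EuclideanSpace.single j 1)) i = A i j
    have : (EuclideanSpace.single j (1:ℂ) : Fin d → ℂ) = Pi.single j 1 := by
      funext k
      simp [EuclideanSpace.single_apply, Pi.single_apply]
    rw [this, Matrix.mulVec_single]
    simp
  calc ‖A i j‖ = ‖((EuclideanSpace.equiv (Fin d) ℂ).symm (A.mulVec  (EuclideanSpace.single j 1))) i‖ := by
        rw [hcomp]
    _ ≤ _ := euc_coord_le _ i

lemma evar_entry_comp_le {d : ℕ} (A : ℝ → Matrix (Fin d) (Fin d) ℂ) (s : Set ℝ)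
    (i j : Fin d) (g : ℂ → ℝ) (hg : LipschitzWith 1 g) :
    eVariationOn (fun τ => g (A τ i j)) s ≤ eVariationOn A s := by
  have hL : LipschitzWith 1 (fun M : Matrix (Fin d) (Fin d) ℂ => g (M i j)) := by
    apply LipschitzWith.of_dist_le_mul
    intro M N
    simp only [NNReal.coe_one, one_mul]
    calc dist (g (M i j)) (g (N i j)) ≤ dist (M i j) (N i j) := by
          simpa using hg.dist_le_mul (M i j) (N i j)
      _ ≤ dist M N := by
          rw [dist_eq_norm, dist_eq_norm, ← Matrix.sub_apply]
          exact entry_norm_le _ i j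
  have := (hL.lipschitzOnWith (s := univ)).comp_eVariationOn_le (mapsTo_univ A s)
  rw [ENNReal.coe_one, one_mul] at this
  exact this

lemma lip_re : LipschitzWith 1 (fun u : ℂ => u.re) := by
  apply LipschitzWith.of_dist_le_mul
  intro u w
  simp only [NNReal.coe_one, one_mul]
  rw [Real.dist_eq, Complex.dist_eq, ← Complex.sub_re]
  exact Complex.abs_re_le_norm _

lemma lip_im : LipschitzWith 1 (fun u : ℂ => u.im) := by
  apply LipschitzWith.of_dist_le_mul
  intro u w
  simp only [NNReal.coe_one, one_mul]
  rw [Real.dist_eq, Complex.dist_eq, ← Complex.sub_im]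
  exact Complex.abs_im_le_norm _

lemma lsIntIooR_congr (f φ ψ : ℝ → ℝ) (c e : ℝ) (h : EqOn φ ψ (Ioo c e)) :
    lsIntIooR f c e φ = lsIntIooR f c e ψ := by
  unfold lsIntIooR
  rw [setIntegral_congr_fun measurableSet_Ioo h, setIntegral_congr_fun measurableSet_Ioo h]

lemma lsIntIooC_congr (f : ℝ → ℂ) (c e : ℝ) (φ ψ : ℝ → ℂ) (h : EqOn φ ψ (Ioo c e)) :
    lsIntIooC f c e φ = lsIntIooC f c e ψ := by
  unfold lsIntIooC
  rw [lsIntIooR_congr (fun x => (f x).re) (fun τ => (φ τ).re) (fun τ => (ψ τ).re) c e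
      (fun τ hτ => by simp only [h hτ]),
    lsIntIooR_congr (fun x => (f x).im) (fun τ => (φ τ).im) (fun τ => (ψ τ).im) c e
      (fun τ hτ => by simp only [h hτ]),
    lsIntIooR_congr (fun x => (f x).re) (fun τ => (φ τ).im) (fun τ => (ψ τ).im) c e
      (fun τ hτ => by simp only [h hτ]),
    lsIntIooR_congr (fun x => (f x).im) (fun τ => (φ τ).re) (fun τ => (ψ τ).re) c e
      (fun τ hτ => by simp only [h hτ])]

lemma lsIntIooC_bound (f : ℝ → ℂ) (φ : ℝ → ℂ) {a c t S ε : ℝ} (hac : a ≤ c) (hct : c < t)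
    (hfinre : eVariationOn (fun x => (f x).re) (Icc a t) ≠ ⊤)
    (hfinim : eVariationOn (fun x => (f x).im) (Icc a t) ≠ ⊤)
    (hvarre : eVariationOn (fun x => (f x).re) (Ico c t) ≤ ENNReal.ofReal ε)
    (hvarim : eVariationOn (fun x => (f x).im) (Ico c t) ≤ ENNReal.ofReal ε)
    (hφm : Measurable φ) (hφ0 : ∀ τ ∈ Ioc a c, φ τ = 0)
    (hφS : ∀ τ ∈ Ioo c t, ‖φ τ‖ ≤ S) (hS : 0 ≤ S) (hε : 0 ≤ ε) :
    ‖lsIntIooC f a t φ‖ ≤ 8 * (S * ε) := by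
  have hre0 : ∀ τ ∈ Ioc a c, (φ τ).re = 0 := fun τ hτ => by rw [hφ0 τ hτ]; simp
  have him0 : ∀ τ ∈ Ioc a c, (φ τ).im = 0 := fun τ hτ => by rw [hφ0 τ hτ]; simp
  have hreS : ∀ τ ∈ Ioo c t, |(φ τ).re| ≤ S :=
    fun τ hτ => (Complex.abs_re_le_norm _).trans (hφS τ hτ)
  have himS : ∀ τ ∈ Ioo c t, |(φ τ).im| ≤ S :=
    fun τ hτ => (Complex.abs_im_le_norm _).trans (hφS τ hτ)
  have hrem : Measurable fun τ => (φ τ).re := Complex.measurable_re.comp hφm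
  have himm : Measurable fun τ => (φ τ).im := Complex.measurable_im.comp hφm
  have h1 := lsIntIooR_bound (fun x => (f x).re) (fun τ => (φ τ).re) hac hct hfinre hvarre
    hrem hre0 hreS hS hε
  have h2 := lsIntIooR_bound (fun x => (f x).im) (fun τ => (φ τ).im) hac hct hfinim hvarim
    himm him0 himS hS hε
  have h3 := lsIntIooR_bound (fun x => (f x).re) (fun τ => (φ τ).im) hac hct hfinre hvarre
    himm him0 himS hS hε
  have h4 := lsIntIooR_bound (fun x => (f x).im) (fun τ => (φ τ).re) hac hct hfinim hvarim
    hrem hre0 hreS hS hε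
  unfold lsIntIooC
  set r1 := lsIntIooR (fun x => (f x).re) a t (fun τ => (φ τ).re) with hr1
  set r2 := lsIntIooR (fun x => (f x).im) a t (fun τ => (φ τ).im) with hr2
  set r3 := lsIntIooR (fun x => (f x).re) a t (fun τ => (φ τ).im) with hr3
  set r4 := lsIntIooR (fun x => (f x).im) a t (fun τ => (φ τ).re) with hr4
  have e1 : ‖((r1 : ℂ) - r2 : ℂ)‖ = |r1 - r2| := by
    rw [← Complex.ofReal_sub, Complex.norm_real, Real.norm_eq_abs]
  have e2 : ‖(Complex.I * ((r3 : ℂ) + r4) : ℂ)‖ = |r3 + r4| := by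
    rw [norm_mul, Complex.norm_I, one_mul, ← Complex.ofReal_add, Complex.norm_real,
      Real.norm_eq_abs]
  calc ‖((r1 : ℂ) - r2 + Complex.I * ((r3 : ℂ) + r4) : ℂ)‖
      ≤ ‖((r1 : ℂ) - r2 : ℂ)‖ + ‖(Complex.I * ((r3 : ℂ) + r4) : ℂ)‖ := norm_add_le _ _
    _ = |r1 - r2| + |r3 + r4| := by rw [e1, e2]
    _ ≤ (|r1| + |r2|) + (|r3| + |r4|) := by
        gcongr <;> [exact abs_sub r1 r2; exact abs_add_le r3 r4]
    _ ≤ 8 * (S * ε) := by linarith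

end AuxLemmas2

/-- **Uniqueness for the homogeneous Stieltjes–Volterra equation.**

If `κ` is a Stieltjes–Volterra kernel of type `B^∞` on `[a,b] × [a,b]` and
`z : [a,b] → ℂ^d` is bounded and measurable with
`z t = ∫_{(a,t)} dκ(t,τ) z(τ)` for all `a ≤ t ≤ b`
(the integral being over the open interval `(a,t)`), then `z ≡ 0` on `[a,b]`. -/
theorem homogeneous_volterra_trivial
    (d : ℕ) (hd : 0 < d) (a b : ℝ) (hab : a < b)
    (κ : ℝ → ℝ → Matrix (Fin d) (Fin d) ℂ) (hκ : IsSVKernel d a b κ)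
    (z : ℝ → EuclideanSpace ℂ (Fin d))
    (hzmeas : Measurable ((Icc a b).restrict z))
    (hzbdd : ∃ C : ℝ, ∀ t ∈ Icc a b, ‖z t‖ ≤ C)
    (hzeq : ∀ t ∈ Icc a b, z t = toEuc (lsIntIooMV (κ t) a t (fun τ => z τ))) :
    ∀ t ∈ Icc a b, z t = 0 := by
  classical
  obtain ⟨hκmeas, hκzero, hκcont, ⟨CV, hκvar⟩, hκsmall⟩ := hκ
  obtain ⟨C, hC⟩ := hzbdd
  set M : ℝ := max C 0 with hM
  set z₁ : ℝ → EuclideanSpace ℂ (Fin d) := fun x => if h : x ∈ Icc a b then z x else 0 with hz₁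
  have hz₁eq : ∀ x ∈ Icc a b, z₁ x = z x := by
    intro x hx
    simp only [hz₁]
    rw [dif_pos hx]
  have hz₁meas : Measurable z₁ := Measurable.dite hzmeas measurable_const measurableSet_Icc
  have hz₁bd : ∀ x, ‖z₁ x‖ ≤ M := by
    intro x
    by_cases hx : x ∈ Icc a b
    · rw [hz₁eq x hx]; exact (hC x hx).trans (le_max_left _ _)
    · have hzx : z₁ x = 0 := by simp only [hz₁]; rw [dif_neg hx]
      rw [hzx, norm_zero, hM]
      exact le_max_right C 0
  have hdR : (0:ℝ) < (d:ℝ) := by exact_mod_cast hd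
  have hd0 : ((d:ℝ)) ≠ 0 := ne_of_gt hdR
  set ε : ℝ := (16 * (d:ℝ)^2)⁻¹ with hεdef
  have hε0 : 0 < ε := by rw [hεdef]; positivity
  obtain ⟨η, hη0, hsmall⟩ := hκsmall ε hε0
  set η' : ℝ := η / 2 with hη'def
  have hη'0 : 0 < η' := by rw [hη'def]; positivity
  have hη'η : η' < η := by rw [hη'def]; linarith
  have hcomp_meas : ∀ j : Fin d, Measurable fun τ => (z₁ τ) j := by
    intro j
    exact (measurable_pi_apply j).comp ((WithLp.measurable_ofLp 2 (Fin d → ℂ)).comp hz₁meas)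
  -- base point
  have hza : z a = 0 := by
    have h0 : lsIntIooMV (κ a) a a (fun τ => z τ) = fun _ => 0 := by
      funext i
      unfold lsIntIooMV lsIntIooC lsIntIooR
      simp [Set.Ioo_self, MeasureTheory.setIntegral_empty]
    rw [hzeq a ⟨le_rfl, hab.le⟩, h0]
    exact WithLp.toLp_zero 2
  -- the step
  have hstep : ∀ c, a ≤ c → c < b → (∀ x ∈ Icc a c, z x = 0) →
      ∀ x ∈ Ioc c (min (c + η') b), z x = 0 := by
    intro c hac hcb hzc
    set T := min (c + η') b with hT
    have hcT : c < T := lt_min (by linarith) hcb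
    have hTb : T ≤ b := min_le_right _ _
    have hTη : T ≤ c + η' := min_le_left _ _
    set Sset := (fun τ => ‖z τ‖) '' (Ioc c T) with hSset
    have hmemT : ‖z T‖ ∈ Sset := ⟨T, ⟨hcT, le_rfl⟩, rfl⟩
    have hne : Sset.Nonempty := ⟨_, hmemT⟩
    have hbddS : BddAbove Sset := by
      refine ⟨M, ?_⟩
      rintro _ ⟨τ, hτ, rfl⟩
      show ‖z τ‖ ≤ M
      rw [← hz₁eq τ ⟨hac.trans hτ.1.le, hτ.2.trans hTb⟩]
      exact hz₁bd τ
    set S := sSup Sset with hSdef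
    have hS0 : 0 ≤ S := le_trans (norm_nonneg (z T)) (le_csSup hbddS hmemT)
    have hSle : ∀ τ ∈ Ioc c T, ‖z τ‖ ≤ S := fun τ hτ => le_csSup hbddS ⟨τ, hτ, rfl⟩
    have hkey : ∀ t' ∈ Ioc c T, ‖z t'‖ ≤ S / 2 := by
      intro t' ht'
      have hct' : c < t' := ht'.1
      have ht'T : t' ≤ T := ht'.2
      have ht'b : t' ≤ b := ht'T.trans hTb
      have ht'ab : t' ∈ Icc a b := ⟨hac.trans hct'.le, ht'b⟩
      have hcab : c ∈ Icc a b := ⟨hac, hcb.le⟩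
      have hvt : eVariationOn (κ t') (Ico c t') < ENNReal.ofReal ε :=
        hsmall t' ht'ab c hcab (by linarith) (by linarith)
      have hvfin : eVariationOn (κ t') (Icc a t') ≠ ⊤ :=
        ne_top_of_le_ne_top ENNReal.ofReal_ne_top
          ((eVariationOn.mono (κ t') (Icc_subset_Icc le_rfl ht'b)).trans (hκvar t' ht'ab))
      have hCb : ∀ i j : Fin d,
          ‖lsIntIooC (fun τ => κ t' τ i j) a t' (fun τ => z τ j)‖ ≤ 8 * (S * ε) := by
        intro i j
        have hsub : Ioo a t' ⊆ Icc a b := fun τ hτ => ⟨hτ.1.le, hτ.2.le.trans ht'b⟩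
        rw [lsIntIooC_congr (fun τ => κ t' τ i j) a t' (fun τ => z τ j) (fun τ => (z₁ τ) j)
          (fun τ hτ => by show z τ j = z₁ τ j; rw [hz₁eq τ (hsub hτ)])]
        apply lsIntIooC_bound _ _ hac hct'
        · exact ne_top_of_le_ne_top hvfin (evar_entry_comp_le _ _ i j _ lip_re)
        · exact ne_top_of_le_ne_top hvfin (evar_entry_comp_le _ _ i j _ lip_im)
        · exact (evar_entry_comp_le _ _ i j _ lip_re).trans hvt.le
        · exact (evar_entry_comp_le _ _ i j _ lip_im).trans hvt.le
        · exact hcomp_meas j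
        · intro τ hτ
          show (z₁ τ) j = 0
          rw [hz₁eq τ ⟨hτ.1.le, hτ.2.trans hcb.le⟩, hzc τ ⟨hτ.1.le, hτ.2⟩]
          rfl
        · intro τ hτ
          show ‖(z₁ τ) j‖ ≤ S
          have hmem : τ ∈ Icc a b := ⟨hac.trans hτ.1.le, hτ.2.le.trans ht'b⟩
          calc ‖(z₁ τ) j‖ ≤ ‖z₁ τ‖ := euc_coord_le (z₁ τ) j
            _ = ‖z τ‖ := by rw [hz₁eq τ hmem]
            _ ≤ S := hSle τ ⟨hτ.1, hτ.2.le.trans ht'T⟩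
        · exact hS0
        · exact hε0.le
      rw [hzeq t' ht'ab]
      calc ‖toEuc (lsIntIooMV (κ t') a t' fun τ => z τ)‖
          ≤ ∑ i, ‖(lsIntIooMV (κ t') a t' fun τ => z τ) i‖ := euc_norm_le_sum _
        _ ≤ ∑ _i : Fin d, (d : ℝ) * (8 * (S * ε)) := by
            apply Finset.sum_le_sum
            intro i _
            calc ‖(lsIntIooMV (κ t') a t' fun τ => z τ) i‖
                = ‖∑ j, lsIntIooC (fun τ => κ t' τ i j) a t' (fun τ => z τ j)‖ := rfl
              _ ≤ ∑ j, ‖lsIntIooC (fun τ => κ t' τ i j) a t' (fun τ => z τ j)‖ :=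
                  norm_sum_le _ _
              _ ≤ ∑ _j : Fin d, (8 * (S * ε)) := Finset.sum_le_sum fun j _ => hCb i j
              _ = (d : ℝ) * (8 * (S * ε)) := by
                  rw [Finset.sum_const, Finset.card_univ, Fintype.card_fin, nsmul_eq_mul]
        _ = S / 2 := by
            rw [Finset.sum_const, Finset.card_univ, Fintype.card_fin, nsmul_eq_mul, hεdef]
            field_simp
            ring
    have hS2 : S ≤ S / 2 := csSup_le hne (by rintro _ ⟨τ, hτ, rfl⟩; exact hkey τ hτ)
    intro x hx
    have hx2 := hkey x hx
    have hx0 : ‖z x‖ ≤ 0 := by linarith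
    exact norm_le_zero_iff.1 hx0
  -- induction along the grid
  have hn : ∀ n : ℕ, ∀ x ∈ Icc a (min (a + (n : ℝ) * η') b), z x = 0 := by
    intro n
    induction n with
    | zero =>
      intro x hx
      have h0 : min (a + ((0:ℕ) : ℝ) * η') b = a := by
        simp [min_eq_left hab.le]
      rw [h0] at hx
      have hxa : x = a := le_antisymm hx.2 hx.1
      rw [hxa]; exact hza
    | succ n ih =>
      intro x hx
      set c := min (a + (n : ℝ) * η') b with hc
      have hac : a ≤ c := le_min (by nlinarith [Nat.cast_nonneg (α := ℝ) n, hη'0.le]) hab.le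
      by_cases hcb : c < b
      · have hub : a + (n : ℝ) * η' < b := by
          by_contra hub
          have : c = b := min_eq_right (not_lt.1 hub)
          rw [this] at hcb
          exact lt_irrefl b hcb
        have hcu : c = a + (n : ℝ) * η' := min_eq_left hub.le
        rcases le_or_gt x c with hxc | hcx
        · exact ih x ⟨hx.1, hxc⟩
        · apply hstep c hac hcb ih x
          constructor
          · exact hcx
          · have h1 : x ≤ a + ((n:ℕ)+1 : ℝ) * η' := by
              have := hx.2.trans (min_le_left _ _)
              push_cast at this ⊢
              linarith
            have h2 : x ≤ b := hx.2.trans (min_le_right _ _)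
            refine le_min ?_ h2
            rw [hcu]
            linarith
      · have hcb' : c = b := le_antisymm (min_le_right _ _) (not_lt.1 hcb)
        apply ih x
        refine ⟨hx.1, hx.2.trans ?_⟩
        rw [hcb']
        exact min_le_right _ _
  intro t ht
  obtain ⟨n, hn'⟩ := exists_nat_ge ((b - a) / η')
  apply hn n
  have hge : b ≤ a + (n : ℝ) * η' := by
    rw [div_le_iff₀ hη'0] at hn'
    linarith
  rw [min_eq_right hge]
  exact ht


end
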